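/- Let C be an essentially small triangulated category, S a dense complete full subcategory of C, and g(S) the subgroup of K0(C) generated by {[A] : A ∈ S}. Then an object A of C belongs to S if and only if [A] ∈ g(S). -/

import Mathlib

/-!
Grothendieck groups of essentially small triangulated categories.

`K0 C` is the quotient of the free abelian group on the isomorphism classes of objects
of `C` by the subgroup generated by the Euler relations `⟨X⟩ - ⟨Y⟩ + ⟨Z⟩` coming from
distinguished triangles `X ⟶ Y ⟶ Z ⟶ X⟦1⟧`; `K0.mk C A` is the class `[A]`.
A full subcategory (identified with its set of objects) is *dense* if every object of `C`
is a direct summand of an object of the subcategory, and *complete* if whenever two of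
the three objects of a distinguished triangle lie in it, so does the third.
-/

open CategoryTheory CategoryTheory.Limits CategoryTheory.Pretriangulated ZeroObject

universe w v u

namespace TriK0

variable (C : Type u) [Category.{v} C] [HasZeroObject C] [Preadditive C] [HasShift C ℤ]
  [∀ n : ℤ, (shiftFunctor C n).Additive] [Pretriangulated C]

/-- The isomorphism class of an object. -/
def isoCl (A : C) : Quotient (isIsomorphicSetoid C) := Quotient.mk (isIsomorphicSetoid C) A

/-- The subgroup of Euler relations coming from distinguished triangles. -/
def K0Rels : AddSubgroup (FreeAbelianGroup (Quotient (isIsomorphicSetoid C))) :=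
  AddSubgroup.closure
    { x | ∃ T : Triangle C, T ∈ (distTriang C) ∧
        x = FreeAbelianGroup.of (isoCl C T.obj₁) - FreeAbelianGroup.of (isoCl C T.obj₂)
          + FreeAbelianGroup.of (isoCl C T.obj₃) }

/-- The Grothendieck group of the triangulated category `C`. -/
def K0 : Type u := FreeAbelianGroup (Quotient (isIsomorphicSetoid C)) ⧸ K0Rels C

noncomputable instance : AddCommGroup (K0 C) :=
  QuotientAddGroup.Quotient.addCommGroup _

/-- The class `[A]` of an object `A` in the Grothendieck group. -/
def K0.mk (A : C) : K0 C := QuotientAddGroup.mk (FreeAbelianGroup.of (isoCl C A))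

/-- A full subcategory is dense if every object of `C` is a direct summand of an object
of the subcategory. -/
noncomputable def DenseSub (S : Set C) : Prop :=
  ∀ A : C, ∃ X ∈ S, ∃ A' : C, Nonempty (X ≅ A ⊞ A')

/-- A full subcategory is complete if, in any distinguished triangle, whenever two of the
three objects belong to the subcategory, so does the third. -/
def CompleteSub (S : Set C) : Prop :=
  ∀ T ∈ (distTriang C),
    (T.obj₁ ∈ S → T.obj₂ ∈ S → T.obj₃ ∈ S) ∧
    (T.obj₁ ∈ S → T.obj₃ ∈ S → T.obj₂ ∈ S) ∧
    (T.obj₂ ∈ S → T.obj₃ ∈ S → T.obj₁ ∈ S)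

end TriK0

open TriK0

namespace TriK0Aux

open CategoryTheory CategoryTheory.Limits CategoryTheory.Pretriangulated ZeroObject

universe v' u'

variable {C : Type u'} [Category.{v'} C] [HasZeroObject C] [Preadditive C] [HasShift C ℤ]
  [∀ n : ℤ, (shiftFunctor C n).Additive] [Pretriangulated C]

/-- `X ⊞ 0 ≅ X`. -/
noncomputable def biprodZero (X : C) : (X ⊞ (0 : C)) ≅ X where
  hom := biprod.fst
  inv := biprod.inl
  hom_inv_id := by
    apply biprod.hom_ext
    · simp
    · exact (isZero_zero C).eq_of_tgt _ _
  inv_hom_id := by simp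

/-- `0 ⊞ X ≅ X`. -/
noncomputable def zeroBiprod (X : C) : ((0 : C) ⊞ X) ≅ X :=
  (biprod.braiding _ _).trans (biprodZero X)

/-- The shuffle isomorphism `(a ⊞ b) ⊞ (c ⊞ d) ≅ (a ⊞ c) ⊞ (b ⊞ d)`. -/
noncomputable def biprodShuffle (a b c d : C) : ((a ⊞ b) ⊞ (c ⊞ d) : C) ≅ (a ⊞ c) ⊞ (b ⊞ d) :=
  (biprod.associator a b (c ⊞ d)).trans <|
    (biprod.mapIso (Iso.refl a)
      (((biprod.associator b c d).symm.trans
        (biprod.mapIso (biprod.braiding b c) (Iso.refl d))).trans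
          (biprod.associator c b d))).trans
      (biprod.associator a c (b ⊞ d)).symm

/-- The shift of a biproduct. -/
noncomputable def shiftBiprod (A B : C) (n : ℤ) :
    ((A ⊞ B)⟦n⟧ : C) ≅ (A⟦n⟧ ⊞ B⟦n⟧ : C) := by
  haveI : PreservesBiproductsOfShape WalkingPair (shiftFunctor C n) :=
    PreservesFiniteBiproducts.preserves
  haveI := preservesBinaryBiproducts_of_preservesBiproducts (shiftFunctor C n)
  haveI : PreservesBinaryBiproduct A B (shiftFunctor C n) := PreservesBinaryBiproducts.preserves
  exact Functor.mapBiprod _ A B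

/-- The pair of triangles indexed by `WalkingPair`. -/
def pairTri (T₁ T₂ : Triangle C) : WalkingPair → Triangle C := fun j =>
  match j with
  | WalkingPair.left => T₁
  | WalkingPair.right => T₂

/-- The binary fan on `g .left ⊞ g .right`. -/
noncomputable def pairFan (g : WalkingPair → C) : Fan g :=
  Fan.mk (g WalkingPair.left ⊞ g WalkingPair.right) (fun j =>
    match j with
    | WalkingPair.left => biprod.fst
    | WalkingPair.right => biprod.snd)

/-- The fan `pairFan g` is a limit fan. -/
noncomputable def pairFanIsLimit (g : WalkingPair → C) : IsLimit (pairFan g) :=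
  mkFanLimit _ (fun s => biprod.lift (s.proj WalkingPair.left) (s.proj WalkingPair.right))
    (fun s j => by cases j <;> simp [pairFan])
    (fun s m hm => by
      apply biprod.hom_ext
      · simpa [pairFan] using hm WalkingPair.left
      · simpa [pairFan] using hm WalkingPair.right)

lemma hasProductPair (g : WalkingPair → C) : HasProduct g :=
  HasLimit.mk ⟨_, pairFanIsLimit g⟩

/-- The direct sum of two distinguished triangles is distinguished (up to isomorphism of
the three objects with binary biproducts). -/
lemma sum_triangle_dist (T₁ T₂ : Triangle C) (h₁ : T₁ ∈ distTriang C) (h₂ : T₂ ∈ distTriang C) :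
    ∃ T ∈ distTriang C, Nonempty (T.obj₁ ≅ (T₁.obj₁ ⊞ T₂.obj₁ : C)) ∧
      Nonempty (T.obj₂ ≅ (T₁.obj₂ ⊞ T₂.obj₂ : C)) ∧
      Nonempty (T.obj₃ ≅ (T₁.obj₃ ⊞ T₂.obj₃ : C)) := by
  haveI := hasProductPair (fun j => ((pairTri T₁ T₂) j).obj₁)
  haveI := hasProductPair (fun j => ((pairTri T₁ T₂) j).obj₂)
  haveI := hasProductPair (fun j => ((pairTri T₁ T₂) j).obj₃)
  haveI := hasProductPair (fun j => (((pairTri T₁ T₂) j).obj₁)⟦(1 : ℤ)⟧)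
  refine ⟨productTriangle (pairTri T₁ T₂), productTriangle_distinguished _ ?_, ⟨?_⟩, ⟨?_⟩, ⟨?_⟩⟩
  · intro j; cases j
    · exact h₁
    · exact h₂
  · exact limit.isoLimitCone ⟨_, pairFanIsLimit (fun j => ((pairTri T₁ T₂) j).obj₁)⟩
  · exact limit.isoLimitCone ⟨_, pairFanIsLimit (fun j => ((pairTri T₁ T₂) j).obj₂)⟩
  · exact limit.isoLimitCone ⟨_, pairFanIsLimit (fun j => ((pairTri T₁ T₂) j).obj₃)⟩

section SMembership

variable {S : Set C} (hd : DenseSub C S) (hc : CompleteSub C S)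

include hd hc in
lemma zero_mem : (0 : C) ∈ S := by
  obtain ⟨X, hX, -, -⟩ := hd 0
  exact (hc _ (contractible_distinguished X)).1 hX hX

include hd hc in
lemma mem_of_iso {A B : C} (e : A ≅ B) (hB : B ∈ S) : A ∈ S := by
  have hT : Triangle.mk e.hom (0 : B ⟶ (0 : C)) (0 : (0 : C) ⟶ A⟦(1 : ℤ)⟧) ∈ distTriang C :=
    isomorphic_distinguished _ (contractible_distinguished B) _
      (Triangle.isoMk _ _ e (Iso.refl _) (Iso.refl _) (by rfl)
        (by exact zero_comp.trans comp_zero.symm) (by exact zero_comp.trans comp_zero.symm))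
  exact (hc _ hT).2.2 hB (zero_mem hd hc)

include hd hc in
lemma shift_mem {A : C} : A ∈ S ↔ (A⟦(1 : ℤ)⟧ : C) ∈ S := by
  have hT := rot_of_distTriang _ (contractible_distinguished A)
  exact ⟨fun h => (hc _ hT).1 h (zero_mem hd hc), fun h => (hc _ hT).2.2 (zero_mem hd hc) h⟩

include hc in
lemma sum_mem {A B : C} (hA : A ∈ S) (hB : B ∈ S) : (A ⊞ B : C) ∈ S :=
  (hc _ (binaryBiproductTriangle_distinguished A B)).2.1 hA hB

include hc in
lemma summand_mem {A B : C} (hAB : (A ⊞ B : C) ∈ S) (hB : B ∈ S) : A ∈ S :=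
  (hc _ (binaryBiproductTriangle_distinguished A B)).2.2 hAB hB

include hd hc in
lemma dense' (A : C) : ∃ A' : C, (A ⊞ A' : C) ∈ S := by
  obtain ⟨X, hX, A', ⟨e⟩⟩ := hd A
  exact ⟨A', mem_of_iso hd hc e.symm hX⟩

include hd hc in
lemma sum_shift_self_mem (A : C) : (A ⊞ A⟦(1 : ℤ)⟧ : C) ∈ S := by
  obtain ⟨A', hA'⟩ := dense' hd hc A
  obtain ⟨T, hT, ⟨e₁⟩, ⟨e₂⟩, ⟨e₃⟩⟩ := sum_triangle_dist (binaryBiproductTriangle A' A)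
    ((contractibleTriangle A).rotate) (binaryBiproductTriangle_distinguished A' A)
    (rot_of_distTriang _ (contractible_distinguished A))
  have h₁ : T.obj₁ ∈ S := mem_of_iso hd hc (e₁.trans (biprod.braiding A' A)) hA'
  have h₂ : T.obj₂ ∈ S := mem_of_iso hd hc
    (e₂.trans ((biprodZero _).trans (biprod.braiding A' A))) hA'
  exact mem_of_iso hd hc e₃.symm ((hc T hT).1 h₁ h₂)

include hd hc in
lemma key_lemma {T : Triangle C} (hT : T ∈ distTriang C) {X' Z' : C}
    (hX : (T.obj₁ ⊞ X' : C) ∈ S) (hZ : (T.obj₃ ⊞ Z' : C) ∈ S) :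
    ((T.obj₂ ⊞ X') ⊞ Z' : C) ∈ S := by
  obtain ⟨V₁, hV₁, ⟨a₁⟩, ⟨a₂⟩, ⟨a₃⟩⟩ := sum_triangle_dist T.rotate.rotate
    (contractibleTriangle Z') (rot_of_distTriang _ (rot_of_distTriang _ hT))
    (contractible_distinguished Z')
  obtain ⟨V, hV, ⟨b₁⟩, ⟨b₂⟩, ⟨b₃⟩⟩ := sum_triangle_dist V₁
    ((contractibleTriangle (X' ⊞ Z' : C)).rotate.rotate) hV₁
    (rot_of_distTriang _ (rot_of_distTriang _ (contractible_distinguished _)))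
  -- a₁ : V₁.obj₁ ≅ T.obj₃ ⊞ Z', a₂ : V₁.obj₂ ≅ T.obj₁⟦1⟧ ⊞ Z', a₃ : V₁.obj₃ ≅ T.obj₂⟦1⟧ ⊞ 0
  -- b₁ : V.obj₁ ≅ V₁.obj₁ ⊞ 0, b₂ : V.obj₂ ≅ V₁.obj₂ ⊞ (X'⊞Z')⟦1⟧,
  -- b₃ : V.obj₃ ≅ V₁.obj₃ ⊞ (X'⊞Z')⟦1⟧
  have h₁ : V.obj₁ ∈ S := mem_of_iso hd hc
    (b₁.trans ((biprod.mapIso a₁ (Iso.refl _)).trans (biprodZero _))) hZ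
  have h₂ : V.obj₂ ∈ S := by
    have m : ((T.obj₁ ⊞ X')⟦(1 : ℤ)⟧ ⊞ (Z' ⊞ Z'⟦(1 : ℤ)⟧) : C) ∈ S :=
      sum_mem hc ((shift_mem hd hc).1 hX) (sum_shift_self_mem hd hc Z')
    refine mem_of_iso hd hc (b₂.trans ?_) m
    exact ((biprod.mapIso a₂ (shiftBiprod X' Z' 1)).trans
      (biprodShuffle _ _ _ _)).trans (biprod.mapIso (shiftBiprod T.obj₁ X' 1).symm (Iso.refl _))
  have h₃ : V.obj₃ ∈ S := (hc V hV).1 h₁ h₂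
  have h₄ : ((T.obj₂ ⊞ (X' ⊞ Z'))⟦(1 : ℤ)⟧ : C) ∈ S := by
    refine mem_of_iso hd hc ?_ h₃
    exact ((shiftBiprod T.obj₂ (X' ⊞ Z') 1).trans
      ((biprod.mapIso ((biprodZero _).symm.trans (biprod.mapIso (Iso.refl _) (Iso.refl _)))
        (Iso.refl _)).trans
        ((biprod.mapIso a₃.symm (Iso.refl _)).trans b₃.symm)))
  have h₅ : (T.obj₂ ⊞ (X' ⊞ Z') : C) ∈ S := (shift_mem hd hc).2 h₄
  exact mem_of_iso hd hc (biprod.associator _ _ _) h₅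

/-- Two objects are related if they become isomorphic after adding objects of `S`. -/
def grel (S : Set C) (A B : C) : Prop :=
  ∃ P ∈ S, ∃ Q ∈ S, Nonempty ((A ⊞ P : C) ≅ (B ⊞ Q : C))

include hd hc in
lemma grel_of_iso {A B : C} (e : A ≅ B) : grel S A B :=
  ⟨0, zero_mem hd hc, 0, zero_mem hd hc, ⟨biprod.mapIso e (Iso.refl _)⟩⟩

include hd hc in
lemma grel_refl (A : C) : grel S A A := grel_of_iso hd hc (Iso.refl A)

lemma grel_symm {A B : C} (h : grel S A B) : grel S B A := by
  obtain ⟨P, hP, Q, hQ, ⟨e⟩⟩ := h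
  exact ⟨Q, hQ, P, hP, ⟨e.symm⟩⟩

include hc in
lemma grel_trans {A B D : C} (h₁ : grel S A B) (h₂ : grel S B D) : grel S A D := by
  obtain ⟨P, hP, Q, hQ, ⟨e⟩⟩ := h₁
  obtain ⟨P', hP', Q', hQ', ⟨f⟩⟩ := h₂
  refine ⟨P ⊞ P', sum_mem hc hP hP', Q' ⊞ Q, sum_mem hc hQ' hQ, ⟨?_⟩⟩
  calc (A ⊞ (P ⊞ P') : C) ≅ (A ⊞ P) ⊞ P' := (biprod.associator _ _ _).symm
    _ ≅ (B ⊞ Q) ⊞ P' := biprod.mapIso e (Iso.refl _)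
    _ ≅ B ⊞ (Q ⊞ P') := biprod.associator _ _ _
    _ ≅ B ⊞ (P' ⊞ Q) := biprod.mapIso (Iso.refl _) (biprod.braiding _ _)
    _ ≅ (B ⊞ P') ⊞ Q := (biprod.associator _ _ _).symm
    _ ≅ (D ⊞ Q') ⊞ Q := biprod.mapIso f (Iso.refl _)
    _ ≅ D ⊞ (Q' ⊞ Q) := biprod.associator _ _ _

include hc in
lemma grel_add {A B A' B' : C} (h : grel S A B) (h' : grel S A' B') :
    grel S (A ⊞ A' : C) (B ⊞ B' : C) := by
  obtain ⟨P, hP, Q, hQ, ⟨e⟩⟩ := h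
  obtain ⟨P', hP', Q', hQ', ⟨f⟩⟩ := h'
  refine ⟨P ⊞ P', sum_mem hc hP hP', Q ⊞ Q', sum_mem hc hQ hQ', ⟨?_⟩⟩
  calc ((A ⊞ A') ⊞ (P ⊞ P') : C) ≅ (A ⊞ P) ⊞ (A' ⊞ P') := biprodShuffle _ _ _ _
    _ ≅ (B ⊞ Q) ⊞ (B' ⊞ Q') := biprod.mapIso e f
    _ ≅ (B ⊞ B') ⊞ (Q ⊞ Q') := biprodShuffle _ _ _ _

include hd hc in
lemma grel_shift {A B : C} (h : grel S A B) :
    grel S (A⟦(1 : ℤ)⟧ : C) (B⟦(1 : ℤ)⟧ : C) := by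
  obtain ⟨P, hP, Q, hQ, ⟨e⟩⟩ := h
  refine ⟨P⟦(1 : ℤ)⟧, (shift_mem hd hc).1 hP, Q⟦(1 : ℤ)⟧, (shift_mem hd hc).1 hQ, ⟨?_⟩⟩
  calc (A⟦(1 : ℤ)⟧ ⊞ P⟦(1 : ℤ)⟧ : C) ≅ (A ⊞ P)⟦(1 : ℤ)⟧ := (shiftBiprod A P 1).symm
    _ ≅ (B ⊞ Q)⟦(1 : ℤ)⟧ := (shiftFunctor C (1 : ℤ)).mapIso e
    _ ≅ B⟦(1 : ℤ)⟧ ⊞ Q⟦(1 : ℤ)⟧ := shiftBiprod B Q 1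

include hd hc in
lemma grel_zero_of_mem {A : C} (hA : A ∈ S) : grel S A 0 :=
  ⟨0, zero_mem hd hc, A, hA, ⟨(biprodZero A).trans (zeroBiprod A).symm⟩⟩

include hd hc in
lemma mem_of_grel_zero {A : C} (h : grel S A 0) : A ∈ S := by
  obtain ⟨P, hP, Q, hQ, ⟨e⟩⟩ := h
  exact summand_mem hc (mem_of_iso hd hc (e.trans (zeroBiprod Q)) hQ) hP

/-- The setoid on objects given by `grel`. -/
def gsetoid (S : Set C) (hd : DenseSub C S) (hc : CompleteSub C S) : Setoid C :=
  ⟨grel S, ⟨grel_refl hd hc, grel_symm, grel_trans hc⟩⟩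

/-- The group of `grel`-classes of objects. -/
def GG (S : Set C) (hd : DenseSub C S) (hc : CompleteSub C S) : Type u' :=
  Quotient (gsetoid S hd hc)

/-- The class of an object in `GG`. -/
def GG.mk (A : C) : GG S hd hc := Quotient.mk (gsetoid S hd hc) A

noncomputable instance ggGroup : AddCommGroup (GG S hd hc) := by
  letI : Zero (GG S hd hc) := ⟨GG.mk hd hc 0⟩
  letI : Add (GG S hd hc) :=
    ⟨Quotient.map₂ (fun A B => (A ⊞ B : C)) (fun _ _ h _ _ h' => grel_add hc h h')⟩
  letI : Neg (GG S hd hc) :=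
    ⟨Quotient.map (fun A => (A⟦(1 : ℤ)⟧ : C)) (fun _ _ h => grel_shift hd hc h)⟩
  exact
  { add := (· + ·)
    zero := 0
    neg := Neg.neg
    nsmul := nsmulRec
    zsmul := zsmulRec
    add_assoc := by
      rintro ⟨a⟩ ⟨b⟩ ⟨c⟩
      exact Quotient.sound (grel_of_iso hd hc (biprod.associator a b c))
    zero_add := by
      rintro ⟨a⟩
      exact Quotient.sound (grel_of_iso hd hc (zeroBiprod a))
    add_zero := by
      rintro ⟨a⟩
      exact Quotient.sound (grel_of_iso hd hc (biprodZero a))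
    add_comm := by
      rintro ⟨a⟩ ⟨b⟩
      exact Quotient.sound (grel_of_iso hd hc (biprod.braiding a b))
    neg_add_cancel := by
      rintro ⟨a⟩
      refine Quotient.sound ?_
      refine ⟨0, zero_mem hd hc, (a ⊞ a⟦(1 : ℤ)⟧ : C), sum_shift_self_mem hd hc a, ⟨?_⟩⟩
      calc ((a⟦(1 : ℤ)⟧ ⊞ a) ⊞ (0 : C) : C) ≅ a⟦(1 : ℤ)⟧ ⊞ a := biprodZero _
        _ ≅ a ⊞ a⟦(1 : ℤ)⟧ := biprod.braiding _ _
        _ ≅ (0 : C) ⊞ (a ⊞ a⟦(1 : ℤ)⟧) := (zeroBiprod _).symm }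

lemma GG.mk_add (A B : C) :
    GG.mk hd hc (A ⊞ B : C) = GG.mk hd hc A + GG.mk hd hc B := rfl

lemma GG.zero_def : (0 : GG S hd hc) = GG.mk hd hc 0 := rfl

include hd hc in
lemma GG.mk_eq_zero_of_mem {A : C} (hA : A ∈ S) :
    GG.mk hd hc A = 0 :=
  Quotient.sound (grel_zero_of_mem hd hc hA)

lemma GG.triangle {T : Triangle C} (hT : T ∈ distTriang C) :
    GG.mk hd hc T.obj₁ - GG.mk hd hc T.obj₂ + GG.mk hd hc T.obj₃ = 0 := by
  obtain ⟨X', hX'⟩ := dense' hd hc T.obj₁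
  obtain ⟨Z', hZ'⟩ := dense' hd hc T.obj₃
  have hY := key_lemma hd hc hT hX' hZ'
  have e₁ : GG.mk hd hc T.obj₁ + GG.mk hd hc X' = 0 :=
    (GG.mk_add hd hc _ _).symm.trans (GG.mk_eq_zero_of_mem hd hc hX')
  have e₂ : GG.mk hd hc T.obj₃ + GG.mk hd hc Z' = 0 :=
    (GG.mk_add hd hc _ _).symm.trans (GG.mk_eq_zero_of_mem hd hc hZ')
  have e₃ : GG.mk hd hc T.obj₂ + GG.mk hd hc X' + GG.mk hd hc Z' = 0 := by
    have := GG.mk_eq_zero_of_mem hd hc hY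
    rw [GG.mk_add hd hc, GG.mk_add hd hc] at this
    exact this
  have e₄ : (GG.mk hd hc T.obj₁ - GG.mk hd hc T.obj₂ + GG.mk hd hc T.obj₃)
      = (GG.mk hd hc T.obj₁ + GG.mk hd hc X')
        + (GG.mk hd hc T.obj₃ + GG.mk hd hc Z')
        - (GG.mk hd hc T.obj₂ + GG.mk hd hc X' + GG.mk hd hc Z') := by abel
  rw [e₄, e₁, e₂, e₃]
  abel

/-- The homomorphism from the free abelian group to `GG`. -/
noncomputable def ggPre : FreeAbelianGroup (Quotient (isIsomorphicSetoid C)) →+ GG S hd hc :=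
  FreeAbelianGroup.lift (Quotient.lift (fun A => GG.mk hd hc A)
    (fun _ _ hab => Quotient.sound (grel_of_iso hd hc hab.some)))

lemma ggPre_of (A : C) : ggPre hd hc (FreeAbelianGroup.of (isoCl C A)) = GG.mk hd hc A := by
  simp only [ggPre, FreeAbelianGroup.lift_apply_of, isoCl]
  rfl

lemma ggPre_ker : K0Rels C ≤ (ggPre hd hc).ker := by
  rw [K0Rels, AddSubgroup.closure_le]
  rintro x ⟨T, hT, rfl⟩
  simp only [SetLike.mem_coe, AddMonoidHom.mem_ker, map_add, map_sub, ggPre_of]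
  exact GG.triangle hd hc hT

/-- The homomorphism from `K0 C` to `GG`. -/
noncomputable def ggHom : K0 C →+ GG S hd hc :=
  QuotientAddGroup.lift (K0Rels C) (ggPre hd hc) (ggPre_ker hd hc)

lemma ggHom_mk (A : C) : ggHom hd hc (K0.mk C A) = GG.mk hd hc A := by
  have h1 : ggHom hd hc (K0.mk C A) = ggPre hd hc (FreeAbelianGroup.of (isoCl C A)) :=
    QuotientAddGroup.lift_mk (K0Rels C) (ggPre_ker hd hc) _
  exact h1.trans (ggPre_of hd hc A)

end SMembership

end TriK0Aux

/-- For a dense complete full subcategory `S`, an object `A` belongs to `S` if and only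
if `[A]` lies in the subgroup `g(S) = ⟨[B] : B ∈ S⟩` of `K₀(C)`. -/
theorem mem_iff_class_mem_subgroup
    (C : Type u) [Category.{v} C] [HasZeroObject C] [Preadditive C] [HasShift C ℤ]
    [∀ n : ℤ, (shiftFunctor C n).Additive] [Pretriangulated C] [EssentiallySmall.{w} C]
    (S : Set C) (hdense : DenseSub C S) (hcomplete : CompleteSub C S) (A : C) :
    A ∈ S ↔ K0.mk C A ∈ AddSubgroup.closure (K0.mk C '' S) := by
  constructor
  · intro hA
    exact AddSubgroup.subset_closure ⟨A, hA, rfl⟩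
  · intro hA
    have hker : AddSubgroup.closure (K0.mk C '' S) ≤
        (TriK0Aux.ggHom hdense hcomplete).ker := by
      rw [AddSubgroup.closure_le]
      rintro _ ⟨B, hB, rfl⟩
      simp only [SetLike.mem_coe, AddMonoidHom.mem_ker]
      rw [TriK0Aux.ggHom_mk hdense hcomplete B]
      exact TriK0Aux.GG.mk_eq_zero_of_mem hdense hcomplete hB
    have h0 : TriK0Aux.ggHom hdense hcomplete (K0.mk C A) = 0 := hker hA
    rw [TriK0Aux.ggHom_mk hdense hcomplete A] at h0
    have h1 : TriK0Aux.GG.mk hdense hcomplete A = TriK0Aux.GG.mk hdense hcomplete (0 : C) := h0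
    exact TriK0Aux.mem_of_grel_zero hdense hcomplete (Quotient.exact h1)
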